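/- In S = F₂[x₁,…,x_{2n}], let ξ_j = Σ_{ℓ=1}^n (x_{2ℓ-1}^{2^j}x_{2ℓ} + x_{2ℓ-1}x_{2ℓ}^{2^j}) for j ≥ 1. Then ξ₁, …, ξ_{2n} are algebraically independent over F₂. -/

import Mathlib

open MvPolynomial

/-- The symplectic invariants
`ξ_j = Σ_{ℓ=1}^n (x_{2ℓ-1}^{2^j} x_{2ℓ} + x_{2ℓ-1} x_{2ℓ}^{2^j})`
in `F₂[x₁,…,x_{2n}]` (variables indexed `1,…,2n`). -/
noncomputable def xiSymp (n : ℕ) : ℕ → MvPolynomial ℕ (ZMod 2) := fun j =>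
  ∑ ℓ ∈ Finset.range n,
    ((X (2 * ℓ + 1)) ^ (2 ^ j) * X (2 * ℓ + 2) +
      X (2 * ℓ + 1) * (X (2 * ℓ + 2)) ^ (2 ^ j))

variable {R : Type*} [CommRing R] {τ : Type*} [Fintype τ] [DecidableEq τ]

theorem chain_rule (f : τ → MvPolynomial ℕ R) (P : MvPolynomial τ R) (i : ℕ) :
    pderiv i (aeval f P) = ∑ j : τ, aeval f (pderiv j P) * pderiv i (f j) := by
  induction P using MvPolynomial.induction_on with
  | C a => simp [aeval_C]
  | add p q hp hq =>
      rw [map_add, map_add, hp, hq, ← Finset.sum_add_distrib]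
      exact Finset.sum_congr rfl fun j _ => by rw [map_add]; ring_nf; rw [map_add]; ring
  | mul_X p j₀ hp =>
      simp only [map_mul, aeval_X, pderiv_mul, hp, pderiv_X, map_add, aeval_X, add_mul]
      rw [Finset.sum_add_distrib]
      congr 1
      · rw [Finset.sum_mul]
        exact Finset.sum_congr rfl fun j _ => by ring
      · rw [Finset.sum_eq_single j₀]
        · simp
        · intro j _ hj
          simp [Pi.single_apply, hj]
        · simp

/-- partner variable -/
def pa (i : ℕ) : ℕ := if i % 2 = 0 then i + 2 else i

lemma pa_inj {i j : ℕ} (h : pa i = pa j) : i = j := by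
  unfold pa at h
  rcases Nat.even_or_odd i with hi | hi <;> rcases Nat.even_or_odd j with hj | hj <;>
    simp [Nat.even_iff, Nat.odd_iff] at hi hj <;> simp [hi, hj] at h <;> omega

lemma pderiv_xiSymp (n : ℕ) (i : Fin (2 * n)) (m : ℕ) :
    pderiv (i.val + 1) (xiSymp n (m + 1)) = X (pa i.val) ^ (2 ^ (m + 1)) := by
  have h2 : ((2 ^ (m+1) : ℕ) : MvPolynomial ℕ (ZMod 2)) = 0 := by
    rw [Nat.cast_pow, show ((2:ℕ):MvPolynomial ℕ (ZMod 2)) = 0 by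
      exact_mod_cast CharP.cast_eq_zero (MvPolynomial ℕ (ZMod 2)) 2, zero_pow (Nat.succ_ne_zero m)]
  unfold xiSymp
  rw [map_sum]
  have key : ∀ ℓ ∈ Finset.range n,
      pderiv (i.val + 1) ((X (2 * ℓ + 1) : MvPolynomial ℕ (ZMod 2)) ^ (2 ^ (m+1)) * X (2 * ℓ + 2) +
        X (2 * ℓ + 1) * (X (2 * ℓ + 2)) ^ (2 ^ (m+1))) =
      (if i.val + 1 = 2 * ℓ + 2 then X (2*ℓ+1) ^ (2^(m+1)) else 0) +
      (if i.val + 1 = 2 * ℓ + 1 then X (2*ℓ+2) ^ (2^(m+1)) else 0) := by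
    intro ℓ _
    rw [map_add, pderiv_mul, pderiv_mul, pderiv_pow, pderiv_pow, h2]
    simp only [zero_mul, mul_zero, zero_add, add_zero, pderiv_X, Pi.single_apply]
    split_ifs with h1 h2' <;> first | omega | simp
  rw [Finset.sum_congr rfl key]
  rcases Nat.even_or_odd i.val with hi | hi
  · -- i.val = 2q, k = 2q+1 odd: first if never, second iff ℓ = q
    obtain ⟨q, hq⟩ := hi
    have hqn : q < n := by omega
    rw [Finset.sum_add_distrib]
    have e1 : ∀ ℓ ∈ Finset.range n,
        (if i.val + 1 = 2 * ℓ + 2 then (X (2*ℓ+1) : MvPolynomial ℕ (ZMod 2)) ^ (2^(m+1)) else 0) = 0 := by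
      intro ℓ _; rw [if_neg (by omega)]
    have e2 : ∀ ℓ ∈ Finset.range n,
        (if i.val + 1 = 2 * ℓ + 1 then (X (2*ℓ+2) : MvPolynomial ℕ (ZMod 2)) ^ (2^(m+1)) else 0) =
        (if ℓ = q then (X (2*ℓ+2) : MvPolynomial ℕ (ZMod 2)) ^ (2^(m+1)) else 0) := by
      intro ℓ _; congr 1; simp only [eq_iff_iff]; omega
    rw [Finset.sum_congr rfl e1, Finset.sum_congr rfl e2, Finset.sum_const_zero, zero_add,
      Finset.sum_ite_eq' _ q, if_pos (Finset.mem_range.mpr hqn)]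
    have : pa i.val = 2 * q + 2 := by unfold pa; rw [if_pos (by omega)]; omega
    rw [this]
  · obtain ⟨q, hq⟩ := hi
    have hqn : q < n := by omega
    rw [Finset.sum_add_distrib]
    have e1 : ∀ ℓ ∈ Finset.range n,
        (if i.val + 1 = 2 * ℓ + 2 then (X (2*ℓ+1) : MvPolynomial ℕ (ZMod 2)) ^ (2^(m+1)) else 0) =
        (if ℓ = q then (X (2*ℓ+1) : MvPolynomial ℕ (ZMod 2)) ^ (2^(m+1)) else 0) := by
      intro ℓ _; congr 1; simp only [eq_iff_iff]; omega
    have e2 : ∀ ℓ ∈ Finset.range n,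
        (if i.val + 1 = 2 * ℓ + 1 then (X (2*ℓ+2) : MvPolynomial ℕ (ZMod 2)) ^ (2^(m+1)) else 0) = 0 := by
      intro ℓ _; rw [if_neg (by omega)]
    rw [Finset.sum_congr rfl e1, Finset.sum_congr rfl e2, Finset.sum_const_zero, add_zero,
      Finset.sum_ite_eq' _ q, if_pos (Finset.mem_range.mpr hqn)]
    have : pa i.val = 2 * q + 1 := by unfold pa; rw [if_neg (by omega)]; omega
    rw [this]

lemma prod_X_pow {N : ℕ} (g : Fin N → ℕ) (e : Fin N → ℕ) :
    (∏ i : Fin N, (X (g i) : MvPolynomial ℕ (ZMod 2)) ^ (e i)) =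
      monomial (∑ i : Fin N, Finsupp.single (g i) (e i)) 1 := by
  induction N with
  | zero => simp [monomial_eq]
  | succ N ih =>
      rw [Fin.prod_univ_succ, Fin.sum_univ_succ, ih (fun i => g i.succ) (fun i => e i.succ),
        X_pow_eq_monomial, monomial_mul, one_mul]

lemma sum_single_apply {N : ℕ} (e : Fin N → ℕ) (i₀ : Fin N) :
    (∑ i : Fin N, Finsupp.single (pa i.val) (e i)) (pa i₀.val) = e i₀ := by
  rw [Finsupp.finset_sum_apply, Finset.sum_eq_single i₀]
  · rw [Finsupp.single_apply, if_pos rfl]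
  · intro j _ hj
    rw [Finsupp.single_apply, if_neg (fun h => hj (Fin.val_injective (pa_inj h)))]
  · simp

noncomputable def Jmat (n : ℕ) : Matrix (Fin (2*n)) (Fin (2*n)) (MvPolynomial ℕ (ZMod 2)) :=
  fun j i => X (pa i.val) ^ (2 ^ (j.val + 1))

lemma det_Jmat_ne_zero (n : ℕ) : (Jmat n).det ≠ 0 := by
  set d₀ : ℕ →₀ ℕ := ∑ i : Fin (2*n), Finsupp.single (pa i.val) (2 ^ (i.val + 1)) with hd₀
  have hcoeff : coeff d₀ (Jmat n).det = 1 := by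
    rw [Matrix.det_apply]
    have hterm : ∀ σ : Equiv.Perm (Fin (2*n)),
        coeff d₀ (∏ i : Fin (2*n), Jmat n (σ i) i) = if σ = 1 then 1 else 0 := by
      intro σ
      unfold Jmat
      rw [prod_X_pow (fun i => pa i.val) (fun i => 2 ^ ((σ i).val + 1)), coeff_monomial]
      by_cases hσ : σ = 1
      · subst hσ; simp [hd₀]
      · rw [if_neg, if_neg hσ]
        intro h
        apply hσ
        ext i₀ : 1
        have := congrArg (fun f : ℕ →₀ ℕ => f (pa i₀.val)) h
        simp only [hd₀, sum_single_apply] at this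
        have : (σ i₀).val + 1 = i₀.val + 1 := Nat.pow_right_injective (by norm_num) this
        rw [Equiv.Perm.one_apply]
        exact Fin.val_injective (by omega)
    -- now sum over permutations
    rw [MvPolynomial.coeff_sum]
    have : ∀ σ ∈ (Finset.univ : Finset (Equiv.Perm (Fin (2*n)))),
        coeff d₀ (Equiv.Perm.sign σ • ∏ i, Jmat n (σ i) i) = if σ = 1 then 1 else 0 := by
      intro σ _
      rcases Int.units_eq_one_or (Equiv.Perm.sign σ) with h | h <;>
        rw [h] <;> simp [hterm σ, CharTwo.neg_eq]
    rw [Finset.sum_congr rfl this, Finset.sum_ite_eq' _ (1 : Equiv.Perm (Fin (2*n)))]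
    simp
  intro h
  rw [h] at hcoeff
  simp at hcoeff

open Matrix in
lemma derivs_vanish (n : ℕ) (P : MvPolynomial (Fin (2*n)) (ZMod 2))
    (hP : aeval (fun j : Fin (2*n) => xiSymp n (j.val+1)) P = 0) (j : Fin (2*n)) :
    aeval (fun j : Fin (2*n) => xiSymp n (j.val+1)) (pderiv j P) = 0 := by
  set Ξ : Fin (2*n) → MvPolynomial ℕ (ZMod 2) := fun j => xiSymp n (j.val+1) with hΞ
  set v : Fin (2*n) → MvPolynomial ℕ (ZMod 2) := fun j => aeval Ξ (pderiv j P) with hv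
  have hrel : (Jmat n)ᵀ *ᵥ v = 0 := by
    funext i
    have := chain_rule Ξ P (i.val + 1)
    rw [hP, map_zero] at this
    have hJ : ∀ j : Fin (2*n), pderiv (i.val + 1) (Ξ j) = Jmat n j i := fun j =>
      pderiv_xiSymp n i j.val
    simp only [Matrix.mulVec, dotProduct, Matrix.transpose_apply, Pi.zero_apply]
    calc ∑ x : Fin (2*n), Jmat n x i * v x
        = ∑ x : Fin (2*n), aeval Ξ (pderiv x P) * pderiv (i.val + 1) (Ξ x) :=
          Finset.sum_congr rfl fun x _ => by rw [hJ x, hv]; ring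
      _ = 0 := this.symm
  have hdet : ((Jmat n)ᵀ).det • v = 0 := by
    have := congrArg (fun w => (Jmat n)ᵀ.adjugate *ᵥ w) hrel
    simpa [Matrix.mulVec_mulVec, Matrix.adjugate_mul, Matrix.smul_mulVec,
      Matrix.one_mulVec] using this
  have hd : ((Jmat n)ᵀ).det ≠ 0 := by rw [Matrix.det_transpose]; exact det_Jmat_ne_zero n
  have := congrFun hdet j
  simp only [Pi.smul_apply, smul_eq_mul, Pi.zero_apply, mul_eq_zero] at this
  exact this.resolve_left hd

lemma coeff_pderiv' {τ : Type*} [DecidableEq τ] {R : Type*} [CommRing R] (j : τ) (d : τ →₀ ℕ)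
    (P : MvPolynomial τ R) :
    coeff d (pderiv j P) = ((d j + 1 : ℕ) : R) * coeff (d + Finsupp.single j 1) P := by
  induction P using MvPolynomial.induction_on' with
  | add p q hp hq => simp [hp, hq, mul_add]
  | monomial s a =>
      rw [pderiv_monomial, coeff_monomial, coeff_monomial]
      by_cases h : s = d + Finsupp.single j 1
      · subst h
        rw [if_pos (add_tsub_cancel_right _ _), if_pos rfl, Finsupp.add_apply,
          Finsupp.single_eq_same]
        ring
      · rw [if_neg h, mul_zero]
        by_cases h2 : s - Finsupp.single j 1 = d
        · rw [if_pos h2]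
          have hsj : s j = 0 := by
            by_contra hs
            apply h
            have hle : Finsupp.single j 1 ≤ s := by
              rw [Finsupp.single_le_iff]; omega
            rw [← h2, tsub_add_cancel_of_le hle]
          rw [hsj]
          simp
        · rw [if_neg h2]

lemma even_exponents {τ : Type*} [DecidableEq τ] (j : τ) (P : MvPolynomial τ (ZMod 2))
    (h : pderiv j P = 0) (d : τ →₀ ℕ) (hd : d ∈ P.support) : 2 ∣ d j := by
  by_contra hodd
  have h1 : d j ≥ 1 := by omega
  set d' := d - Finsupp.single j 1 with hd'
  have hadd : d' + Finsupp.single j 1 = d := by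
    rw [hd', tsub_add_cancel_of_le (by rw [Finsupp.single_le_iff]; omega)]
  have := coeff_pderiv' j d' P
  rw [h, hadd] at this
  have hd'j : d' j = d j - 1 := by
    rw [hd']; simp [Finsupp.single_apply]
  have hcast : ((d' j + 1 : ℕ) : ZMod 2) = 1 := by
    rw [hd'j]
    have : ¬ (2 ∣ (d j - 1 + 1)) := by omega
    have h0 := (ZMod.natCast_eq_zero_iff (d j - 1 + 1) 2).not.mpr this
    have : ∀ x : ZMod 2, x ≠ 0 → x = 1 := by decide
    exact this _ h0
  rw [coeff_zero, hcast, one_mul] at this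
  rw [MvPolynomial.mem_support_iff] at hd
  exact hd this.symm

/-- halve a finsupp -/
noncomputable def halve {τ : Type*} (d : τ →₀ ℕ) : τ →₀ ℕ :=
  Finsupp.mapRange (· / 2) (by norm_num) d

lemma aeval_monomial_two_smul {τ : Type*} (f : τ → MvPolynomial ℕ (ZMod 2)) (e : τ →₀ ℕ) (c : ZMod 2) :
    aeval f (monomial (2 • e) c) = (aeval f (monomial e c)) ^ 2 := by
  rw [aeval_monomial, aeval_monomial, mul_pow, ← map_pow]
  have hc : c ^ 2 = c := by revert c; decide
  rw [hc]
  congr 1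
  have hsupp : (2 • e).support = e.support := Finsupp.support_smul_eq (by norm_num)
  rw [Finsupp.prod, Finsupp.prod, hsupp, ← Finset.prod_pow]
  apply Finset.prod_congr rfl
  intro i _
  rw [Finsupp.smul_apply, smul_eq_mul, pow_mul']

lemma halve_two_smul {τ : Type*} {d : τ →₀ ℕ} (h : ∀ j, 2 ∣ d j) : 2 • halve d = d := by
  ext i
  rw [Finsupp.smul_apply, smul_eq_mul]
  unfold halve
  rw [Finsupp.mapRange_apply]
  have := h i
  omega

lemma sum_add_single (d : (Fin N) →₀ ℕ) (j : Fin N) :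
    ((d + Finsupp.single j 1).sum fun _ e => e) = (d.sum fun _ e => e) + 1 := by
  classical
  rw [Finsupp.sum_add_index' (fun _ => rfl) (fun _ _ _ => rfl), Finsupp.sum_single_index rfl]

lemma main_ind (n : ℕ) : ∀ m : ℕ, ∀ P : MvPolynomial (Fin (2*n)) (ZMod 2),
    P.totalDegree ≤ m →
    aeval (fun j : Fin (2*n) => xiSymp n (j.val+1)) P = 0 → P = 0 := by
  intro m
  induction m with
  | zero =>
      intro P hdeg h0
      have hz : P.totalDegree = 0 := Nat.le_zero.mp hdeg
      rw [totalDegree_eq_zero_iff] at hz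
      have hPC : P = C (coeff 0 P) := by
        apply MvPolynomial.ext
        intro d
        by_cases hd : d = 0
        · subst hd; rw [coeff_C, if_pos rfl]
        · rw [coeff_C, if_neg (Ne.symm hd)]
          by_contra hne
          exact hd (Finsupp.ext fun x => hz d (MvPolynomial.mem_support_iff.mpr hne) x)
      rw [hPC] at h0 ⊢
      rw [aeval_C] at h0
      rw [show coeff 0 P = 0 from (algebraMap (ZMod 2) (MvPolynomial ℕ (ZMod 2))).injective
        (by rw [h0, map_zero]), map_zero]
  | succ m ih =>
      intro P hdeg h0
      have hder : ∀ j : Fin (2*n), pderiv j P = 0 := by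
        intro j
        apply ih _ _ (derivs_vanish n P h0 j)
        rw [totalDegree]
        apply Finset.sup_le
        intro d hd
        rw [MvPolynomial.mem_support_iff, coeff_pderiv'] at hd
        have hcoeff : coeff (d + Finsupp.single j 1) P ≠ 0 := by
          intro h; rw [h, mul_zero] at hd; exact hd rfl
        have := le_totalDegree (MvPolynomial.mem_support_iff.mpr hcoeff)
        have h2 := sum_add_single d j
        omega
      -- all exponents even
      have heven : ∀ d ∈ P.support, ∀ j, 2 ∣ d j := fun d hd j =>
        even_exponents j P (hder j) d hd
      set Ξ : Fin (2*n) → MvPolynomial ℕ (ZMod 2) := fun j => xiSymp n (j.val+1) with hΞ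
      set Q : MvPolynomial (Fin (2*n)) (ZMod 2) :=
        ∑ d ∈ P.support, monomial (halve d) (coeff d P) with hQ
      have hPQ : aeval Ξ P = (aeval Ξ Q) ^ 2 := by
        conv_lhs => rw [← support_sum_monomial_coeff P]
        rw [map_sum, hQ, map_sum, sum_pow_char 2]
        apply Finset.sum_congr rfl
        intro d hd
        rw [← aeval_monomial_two_smul, halve_two_smul (heven d hd)]
      have hq0 : aeval Ξ Q = 0 := by
        rw [hPQ] at h0
        exact pow_eq_zero_iff two_ne_zero |>.mp h0
      have hQdeg : Q.totalDegree ≤ m := by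
        rw [hQ]
        refine le_trans (totalDegree_finset_sum _ _) ?_
        apply Finset.sup_le
        intro d hd
        refine le_trans (totalDegree_monomial_le _ _) ?_
        show ((halve d).sum fun _ e => e) ≤ m
        have h1 : ((halve d).sum fun _ e => e) = d.sum fun _ b => b / 2 :=
          Finsupp.sum_mapRange_index (fun _ => rfl)
        have h2 : (d.sum fun _ b => b / 2) * 2 ≤ d.sum fun _ e => e := by
          rw [Finsupp.sum, Finsupp.sum, Finset.sum_mul]
          apply Finset.sum_le_sum
          intro i _
          omega
        have h3 := le_totalDegree hd
        omega
      have hQ0 : Q = 0 := ih Q hQdeg hq0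
      rw [← support_sum_monomial_coeff P]
      apply Finset.sum_eq_zero
      intro d hd
      have hc : coeff d P = coeff (halve d) Q := by
        rw [hQ, MvPolynomial.coeff_sum, Finset.sum_eq_single d]
        · rw [coeff_monomial, if_pos rfl]
        · intro d' hd' hne
          rw [coeff_monomial, if_neg]
          intro h
          apply hne
          rw [← halve_two_smul (heven d' hd'), ← halve_two_smul (heven d hd), h]
        · intro h; exact absurd hd h
      rw [hc, hQ0, coeff_zero, map_zero]



/-- The elements `ξ₁, …, ξ_{2n}` are algebraically independent over `F₂`. -/
theorem stmt18 (n : ℕ) :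
    AlgebraicIndependent (ZMod 2) (fun j : Fin (2 * n) => xiSymp n (j.val + 1)) := by
  rw [algebraicIndependent_iff]
  intro p hp
  exact main_ind n p.totalDegree p le_rfl hp
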